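/- For gcd(p,q)=1 and q' with qq' ≡ 1 (mod p), and any integer a with 0 < a ≤ p-1: (1/p)·Σ_{ξ^p=1, ξ≠1} ξ^{-a}/(ξ^q - 1) = {a q'/p} + (1-p)/(2p). -/

import Mathlib

/-- The set of nontrivial `p`-th roots of unity in `ℂ`. -/
noncomputable def nontrivialRoots (p : ℕ) : Finset ℂ :=
  (Polynomial.nthRoots p (1 : ℂ)).toFinset.erase 1

lemma mem_nontrivialRoots {p : ℕ} (hp : 0 < p) {ξ : ℂ} :
    ξ ∈ nontrivialRoots p ↔ ξ ^ p = 1 ∧ ξ ≠ 1 := by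
  rw [nontrivialRoots, Finset.mem_erase, Multiset.mem_toFinset,
    Polynomial.mem_nthRoots hp, and_comm]

lemma nontrivialRoots_ne_zero {p : ℕ} (hp : 0 < p) {ξ : ℂ}
    (hξ : ξ ∈ nontrivialRoots p) : ξ ≠ 0 := by
  intro h
  rcases (mem_nontrivialRoots hp).1 hξ with ⟨h1, -⟩
  rw [h, zero_pow hp.ne'] at h1
  exact zero_ne_one h1

/-- If `ξ^p = 1` then `ξ^m` only depends on `m` modulo `p`. -/
lemma zpow_congr_mod {p : ℕ} (hp : 0 < p) {ξ : ℂ} (hξ : ξ ^ p = 1) {m n : ℤ}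
    (h : m ≡ n [ZMOD (p : ℤ)]) : ξ ^ m = ξ ^ n := by
  have hξ0 : ξ ≠ 0 := by
    intro h0; rw [h0, zero_pow hp.ne'] at hξ; exact zero_ne_one hξ
  obtain ⟨k, hk⟩ := h.dvd
  have hn : n = m + (p : ℤ) * k := by linarith
  rw [hn, zpow_add₀ hξ0, zpow_mul, zpow_natCast, hξ, one_zpow, mul_one]

lemma nontrivialRoots_eq (p : ℕ) (hp : 0 < p) {ζ : ℂ} (hζ : IsPrimitiveRoot ζ p) :
    nontrivialRoots p = ((Finset.range p).erase 0).image (ζ ^ ·) := by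
  haveI : NeZero p := ⟨hp.ne'⟩
  ext ξ
  simp only [mem_nontrivialRoots hp, Finset.mem_image, Finset.mem_erase, Finset.mem_range]
  constructor
  · rintro ⟨h1, h2⟩
    obtain ⟨k, hk, rfl⟩ := hζ.eq_pow_of_pow_eq_one h1
    refine ⟨k, ⟨?_, hk⟩, rfl⟩
    rintro rfl
    exact h2 (pow_zero ζ)
  · rintro ⟨k, ⟨hk0, hkp⟩, rfl⟩
    exact ⟨by rw [← pow_mul, mul_comm, pow_mul, hζ.pow_eq_one, one_pow],
      hζ.pow_ne_one_of_pos_of_lt hk0 hkp⟩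

lemma card_nontrivialRoots (p : ℕ) (hp : 0 < p) :
    (nontrivialRoots p).card = p - 1 := by
  obtain ⟨ζ, hζ⟩ : ∃ ζ : ℂ, IsPrimitiveRoot ζ p := ⟨_, Complex.isPrimitiveRoot_exp p hp.ne'⟩
  have h1 : (1 : ℂ) ∈ (Polynomial.nthRoots p (1 : ℂ)).toFinset := by
    rw [Multiset.mem_toFinset, Polynomial.mem_nthRoots hp, one_pow]
  rw [nontrivialRoots, Finset.card_erase_of_mem h1,
    Multiset.toFinset_card_of_nodup (hζ.nthRoots_one_nodup), hζ.card_nthRoots_one]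

/-- The sum of `ξ^c` over nontrivial `p`-th roots of unity, for `0 < c < p`, is `-1`. -/
lemma sum_pow_nontrivialRoots (p : ℕ) (hp : 0 < p) (c : ℕ) (hc0 : 0 < c) (hcp : c < p) :
    ∑ ξ ∈ nontrivialRoots p, ξ ^ c = -1 := by
  obtain ⟨ζ, hζ⟩ : ∃ ζ : ℂ, IsPrimitiveRoot ζ p := ⟨_, Complex.isPrimitiveRoot_exp p hp.ne'⟩
  rw [nontrivialRoots_eq p hp hζ, Finset.sum_image ?inj]
  case inj =>
    intro i hi j hj hij
    exact hζ.pow_inj (Finset.mem_range.1 (Finset.mem_of_mem_erase hi))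
      (Finset.mem_range.1 (Finset.mem_of_mem_erase hj)) hij
  have h0 : (0 : ℕ) ∈ Finset.range p := Finset.mem_range.2 hp
  have key : ∑ k ∈ Finset.range p, (ζ ^ k) ^ c = 0 := by
    have hne : ζ ^ c ≠ 1 := hζ.pow_ne_one_of_pos_of_lt hc0.ne' hcp
    have : ∀ k, (ζ ^ k) ^ c = (ζ ^ c) ^ k := fun k => by rw [← pow_mul, mul_comm, pow_mul]
    simp only [this]
    rw [geom_sum_eq hne, ← pow_mul, mul_comm, pow_mul, hζ.pow_eq_one, one_pow, sub_self,
      zero_div]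
  have := Finset.add_sum_erase _ (fun k => (ζ ^ k) ^ c) h0
  simp only [pow_zero, one_pow] at this
  linear_combination this + key

/-- The sum of `1/(ξ-1)` over nontrivial `p`-th roots of unity is `-(p-1)/2`. -/
lemma sum_one_div_nontrivialRoots (p : ℕ) (hp : 0 < p) :
    ∑ ξ ∈ nontrivialRoots p, 1 / (ξ - 1) = -((p : ℂ) - 1) / 2 := by
  have hinv : ∑ ξ ∈ nontrivialRoots p, 1 / (ξ⁻¹ - 1) =
      ∑ ξ ∈ nontrivialRoots p, 1 / (ξ - 1) := by
    refine Finset.sum_nbij' (fun ξ => ξ⁻¹) (fun ξ => ξ⁻¹) ?_ ?_ ?_ ?_ ?_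
    · intro ξ hξ
      rcases (mem_nontrivialRoots hp).1 hξ with ⟨h1, h2⟩
      refine (mem_nontrivialRoots hp).2 ⟨by show ξ⁻¹ ^ p = 1; rw [inv_pow, h1, inv_one], ?_⟩
      show ξ⁻¹ ≠ 1
      intro h; rw [inv_eq_one] at h; exact h2 h
    · intro ξ hξ
      rcases (mem_nontrivialRoots hp).1 hξ with ⟨h1, h2⟩
      refine (mem_nontrivialRoots hp).2 ⟨by show ξ⁻¹ ^ p = 1; rw [inv_pow, h1, inv_one], ?_⟩
      show ξ⁻¹ ≠ 1
      intro h; rw [inv_eq_one] at h; exact h2 h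
    · intro ξ _; exact inv_inv ξ
    · intro ξ _; exact inv_inv ξ
    · intro ξ _; rfl
  have key : ∑ ξ ∈ nontrivialRoots p, (1 / (ξ - 1) + 1 / (ξ⁻¹ - 1)) = -((p : ℂ) - 1) := by
    have : ∀ ξ ∈ nontrivialRoots p, 1 / (ξ - 1) + 1 / (ξ⁻¹ - 1) = -1 := by
      intro ξ hξ
      rcases (mem_nontrivialRoots hp).1 hξ with ⟨-, h2⟩
      have hξ0 : ξ ≠ 0 := nontrivialRoots_ne_zero hp hξ
      have hξ1 : ξ - 1 ≠ 0 := sub_ne_zero.2 h2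
      have hξi : ξ⁻¹ - 1 ≠ 0 := by
        intro h
        rw [sub_eq_zero, inv_eq_one] at h
        exact h2 h
      have h1ξ : 1 - ξ ≠ 0 := sub_ne_zero.2 (Ne.symm h2)
      field_simp
      ring
    rw [Finset.sum_congr rfl this, Finset.sum_const, card_nontrivialRoots p hp,
      nsmul_eq_mul]
    have : ((p - 1 : ℕ) : ℂ) = (p : ℂ) - 1 := by
      push_cast [Nat.cast_sub hp]
      ring
    rw [this]; ring
  rw [Finset.sum_add_distrib, hinv] at key
  linear_combination key / 2

/-- Key computation: `∑ ξ^c/(ξ-1) = p - c - (p-1)/2` for `0 < c < p`. -/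
lemma sum_pow_div_nontrivialRoots (p : ℕ) (hp : 0 < p) (c : ℕ) (hc0 : 0 < c) (hcp : c < p) :
    ∑ ξ ∈ nontrivialRoots p, ξ ^ c / (ξ - 1) =
      (p : ℂ) - c - ((p : ℂ) - 1) / 2 := by
  have step : ∀ ξ ∈ nontrivialRoots p,
      ξ ^ c / (ξ - 1) = 1 / (ξ - 1) + ∑ j ∈ Finset.range c, ξ ^ j := by
    intro ξ hξ
    rcases (mem_nontrivialRoots hp).1 hξ with ⟨-, h2⟩
    have hξ1 : ξ - 1 ≠ 0 := sub_ne_zero.2 h2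
    calc ξ ^ c / (ξ - 1)
        = (1 + (∑ j ∈ Finset.range c, ξ ^ j) * (ξ - 1)) / (ξ - 1) := by
          rw [geom_sum_mul]; congr 1; ring
      _ = 1 / (ξ - 1) + ∑ j ∈ Finset.range c, ξ ^ j := by
          rw [add_div, mul_div_cancel_right₀ _ hξ1]
  rw [Finset.sum_congr rfl step, Finset.sum_add_distrib, sum_one_div_nontrivialRoots p hp,
    Finset.sum_comm]
  have inner : ∀ j ∈ Finset.range c, ∑ ξ ∈ nontrivialRoots p, ξ ^ j =
      -1 + if j = 0 then (p : ℂ) else 0 := by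
    intro j hj
    rcases Nat.eq_zero_or_pos j with rfl | hj0
    · simp only [pow_zero, Finset.sum_const, card_nontrivialRoots p hp, nsmul_eq_mul, mul_one,
        if_pos rfl]
      push_cast [Nat.cast_sub hp]
      ring
    · rw [sum_pow_nontrivialRoots p hp j hj0 (lt_of_lt_of_le (Finset.mem_range.1 hj) hcp.le),
        if_neg hj0.ne']
      ring
  rw [Finset.sum_congr rfl inner, Finset.sum_add_distrib, Finset.sum_const, Finset.card_range,
    Finset.sum_ite_eq' (Finset.range c) 0 (fun _ => (p : ℂ)),
    if_pos (Finset.mem_range.2 hc0)]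
  push_cast
  ring

/-- for `gcd(p,q) = 1`, `q q' ≡ 1 (mod p)` and `0 < a ≤ p - 1`:
`(1/p) ∑_{ξ^p = 1, ξ ≠ 1} ξ^{-a}/(ξ^q - 1) = {a q'/p} + (1-p)/(2p)`. -/
theorem roots_of_unity_fract (p : ℕ) (hp : 0 < p) (q q' a : ℤ)
    (hq : IsCoprime q (p : ℤ))
    (hq' : q * q' ≡ 1 [ZMOD (p : ℤ)])
    (hq'0 : 0 < q') (hq'p : q' < p)
    (ha0 : 0 < a) (hap : a ≤ (p : ℤ) - 1) :
    (1 / (p : ℂ)) * ∑ ξ ∈ nontrivialRoots p, ξ ^ (-a) / (ξ ^ q - 1) =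
      ((Int.fract (((a * q' : ℤ) : ℚ) / (p : ℚ)) : ℚ) : ℂ) + (1 - (p : ℂ)) / (2 * p) := by
  have hp2 : 2 ≤ p := by
    by_contra h
    push_neg at h
    interval_cases p <;> omega
  -- the natural number exponents for the substitution
  set t : ℕ := q'.toNat with ht
  set m : ℕ := (q % (p : ℤ)).toNat with hm
  have htz : (t : ℤ) = q' := Int.toNat_of_nonneg hq'0.le
  have hmz : (m : ℤ) = q % (p : ℤ) := Int.toNat_of_nonneg (Int.emod_nonneg q (by positivity))
  have htm : ((t * m : ℕ) : ℤ) ≡ 1 [ZMOD (p : ℤ)] := by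
    push_cast [htz, hmz]
    calc q' * (q % (p : ℤ)) ≡ q' * q [ZMOD (p : ℤ)] :=
          Int.ModEq.mul_left q' (Int.emod_emod_of_dvd q dvd_rfl)
      _ ≡ 1 [ZMOD (p : ℤ)] := by rw [mul_comm]; exact hq'
  -- membership preservation
  have hpow_mem : ∀ (e : ℕ), (e : ℤ).gcd p = 1 → ∀ ξ ∈ nontrivialRoots p,
      ξ ^ e ∈ nontrivialRoots p := by
    intro e he ξ hξ
    rcases (mem_nontrivialRoots hp).1 hξ with ⟨h1, h2⟩
    refine (mem_nontrivialRoots hp).2 ⟨by rw [← pow_mul, mul_comm, pow_mul, h1, one_pow], ?_⟩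
    intro hcon
    -- ξ^e = 1 and ξ^p = 1 with gcd(e,p)=1 imply ξ = 1
    have he' : Nat.Coprime e p := by
      have := he
      rwa [Int.gcd_natCast_natCast] at this
    obtain ⟨x, y, hxy⟩ := Nat.isCoprime_iff_coprime.2 he'
    have : ξ ^ (1 : ℤ) = 1 := by
      rw [← hxy, zpow_add₀ (nontrivialRoots_ne_zero hp hξ), mul_comm x (e : ℤ),
        mul_comm y (p : ℤ), zpow_mul, zpow_mul, zpow_natCast, zpow_natCast, hcon, h1,
        one_zpow, one_zpow, one_mul]
    rw [zpow_one] at this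
    exact h2 this
  -- coprimality facts
  have hq'cop : IsCoprime q' (p : ℤ) := by
    obtain ⟨k, hk⟩ := hq'.dvd
    exact ⟨q, k, by linarith⟩
  have hqmod_cop : IsCoprime (q % (p : ℤ)) (p : ℤ) := by
    have := hq.add_mul_left_left (-(q / (p : ℤ)))
    rwa [show q + (p : ℤ) * -(q / (p : ℤ)) = q % (p : ℤ) by rw [Int.emod_def]; ring] at this
  have hgt : ((t : ℤ)).gcd (p : ℤ) = 1 := Int.isCoprime_iff_gcd_eq_one.mp (htz ▸ hq'cop)
  have hgm : ((m : ℤ)).gcd (p : ℤ) = 1 := Int.isCoprime_iff_gcd_eq_one.mp (hmz ▸ hqmod_cop)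
  -- powering by an exponent ≡ 1 (mod p) is the identity on S
  have hnatpow : ∀ ξ ∈ nontrivialRoots p, ∀ n : ℕ, ((n : ℤ) ≡ 1 [ZMOD (p : ℤ)]) → ξ ^ n = ξ := by
    intro ξ hξ n hn
    obtain ⟨h1, -⟩ := (mem_nontrivialRoots hp).1 hξ
    have := zpow_congr_mod hp h1 hn
    rwa [zpow_natCast, zpow_one] at this
  -- the substitution ξ ↦ ξ^{q'}
  have hsub : ∑ ξ ∈ nontrivialRoots p, ξ ^ (-(a * q')) / (ξ - 1)
      = ∑ ξ ∈ nontrivialRoots p, ξ ^ (-a) / (ξ ^ q - 1) := by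
    refine Finset.sum_nbij' (fun ξ => ξ ^ t) (fun ξ => ξ ^ m)
      (hpow_mem t hgt) (hpow_mem m hgm) ?_ ?_ ?_
    · intro ξ hξ
      show (ξ ^ t) ^ m = ξ
      rw [← pow_mul]
      exact hnatpow ξ hξ (t * m) htm
    · intro ξ hξ
      show (ξ ^ m) ^ t = ξ
      rw [← pow_mul, mul_comm]
      exact hnatpow ξ hξ (t * m) htm
    · intro ξ hξ
      obtain ⟨h1, -⟩ := (mem_nontrivialRoots hp).1 hξ
      show ξ ^ (-(a * q')) / (ξ - 1) = (ξ ^ t) ^ (-a) / ((ξ ^ t) ^ q - 1)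
      have hden : ξ ^ ((t : ℤ) * q) = ξ := by
        have hmeq : (t : ℤ) * q ≡ 1 [ZMOD (p : ℤ)] := by
          rw [htz, mul_comm]; exact hq'
        have := zpow_congr_mod hp h1 hmeq
        rwa [zpow_one] at this
      rw [← zpow_natCast ξ t, ← zpow_mul, ← zpow_mul, hden, htz,
        show q' * -a = -(a * q') by ring]
  -- the residue b and the complementary exponent c
  set b : ℤ := (a * q') % (p : ℤ) with hbdef
  have hppos : (0 : ℤ) < (p : ℤ) := by exact_mod_cast hp
  have hb0 : 0 ≤ b := Int.emod_nonneg _ hppos.ne'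
  have hbp : b < (p : ℤ) := Int.emod_lt_of_pos _ hppos
  have hbne : b ≠ 0 := by
    intro h
    have hdvd : (p : ℤ) ∣ a * q' := Int.dvd_of_emod_eq_zero h
    have hda : (p : ℤ) ∣ a := (hq'cop.symm).dvd_of_dvd_mul_right hdvd
    have := Int.le_of_dvd ha0 hda
    omega
  set c : ℕ := ((p : ℤ) - b).toNat with hcdef
  have hcz : (c : ℤ) = (p : ℤ) - b := Int.toNat_of_nonneg (by omega)
  have hc0 : 0 < c := by omega
  have hcp : c < p := by omega
  -- reduce the exponent -(a q') to c
  have hb_meq : b ≡ a * q' [ZMOD (p : ℤ)] := Int.emod_emod_of_dvd (a * q') dvd_rfl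
  have hpowc : ∀ ξ ∈ nontrivialRoots p, ξ ^ (-(a * q')) = ξ ^ c := by
    intro ξ hξ
    obtain ⟨h1, -⟩ := (mem_nontrivialRoots hp).1 hξ
    have hmeq : -(a * q') ≡ (c : ℤ) [ZMOD (p : ℤ)] := by
      rw [hcz]
      calc -(a * q') ≡ -b [ZMOD (p : ℤ)] := hb_meq.neg.symm
        _ ≡ (p : ℤ) - b [ZMOD (p : ℤ)] := Int.ModEq.symm
            (Int.modEq_iff_dvd.mpr ⟨-1, by ring⟩)
    have := zpow_congr_mod hp h1 hmeq
    rwa [zpow_natCast] at this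
  have hsum : ∑ ξ ∈ nontrivialRoots p, ξ ^ (-a) / (ξ ^ q - 1)
      = (p : ℂ) - c - ((p : ℂ) - 1) / 2 := by
    rw [← hsub, Finset.sum_congr rfl (fun ξ hξ => by rw [hpowc ξ hξ]),
      sum_pow_div_nontrivialRoots p hp c hc0 hcp]
  -- the fractional part
  have hpQ : (0 : ℚ) < (p : ℚ) := by exact_mod_cast hp
  have hfract : Int.fract (((a * q' : ℤ) : ℚ) / (p : ℚ)) = (b : ℚ) / (p : ℚ) := by
    have hd : (a * q' : ℤ) = (p : ℤ) * ((a * q') / (p : ℤ)) + b := (Int.mul_ediv_add_emod _ _).symm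
    have hsplit : ((a * q' : ℤ) : ℚ) / (p : ℚ)
        = ((a * q' / (p : ℤ) : ℤ) : ℚ) + (b : ℚ) / (p : ℚ) := by
      rw [show ((a * q' : ℤ) : ℚ) = ((p : ℤ) * ((a * q') / (p : ℤ)) + b : ℤ) from congrArg (fun z : ℤ => (z : ℚ)) hd]
      push_cast
      field_simp
    rw [hsplit, Int.fract_intCast_add, Int.fract_eq_self.2
      ⟨by positivity, by rw [div_lt_one hpQ]; exact_mod_cast hbp⟩]
  rw [hsum, hfract]
  have hpC : ((p : ℂ)) ≠ 0 := by exact_mod_cast hp.ne'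
  have hcC : ((c : ℂ)) = (p : ℂ) - (b : ℂ) := by
    have : ((c : ℤ) : ℂ) = (((p : ℤ) - b : ℤ) : ℂ) := congrArg (fun z : ℤ => (z : ℂ)) hcz
    push_cast at this
    exact this
  have hbC : (((b : ℚ) / (p : ℚ) : ℚ) : ℂ) = (b : ℂ) / (p : ℂ) := by push_cast; ring
  rw [hbC, hcC]
  field_simp
  ring
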